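/- Let r be a positive integer and a an integer with gcd(r, a−1) = 1. Set u := (0,1), v := (r, 1−a), w := gcd(r,a), ℓ := r/w and δ := (ℓ, −a/w) ∈ ℤ². Then for every integer i, both lattice points u + i·ℓ·δ = (iℓ², 1 − iℓ·(a/w)) and v − i·ℓ·δ are primitive. In particular, all the subdivision points v₀, …, v_{n+1} of the segment from u to v used in the decomposition of the cone (which are of the form u + iℓδ or v − jℓδ with i, j ≥ 0) are primitive. -/

import Mathlib

/-- In the normalized setting `u = (0,1)`, `v = (r, 1-a)`,
`w = gcd(r,a)`, `ℓ = r/w`, `δ = (ℓ, -a/w)`, all the lattice points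
`u + i·ℓ·δ = (iℓ², 1 - iℓ·(a/w))` and `v - i·ℓ·δ = (r - iℓ², 1 - a + iℓ·(a/w))`
are primitive. -/
theorem stmt_2 (r a : ℤ) (hr : 0 < r) (hra : Int.gcd r (a - 1) = 1)
    (w l : ℤ) (hw : w = Int.gcd r a) (hl : l = r / w) :
    ∀ i : ℤ,
      Int.gcd (i * l * l) (1 - i * l * (a / w)) = 1 ∧
      Int.gcd (r - i * l * l) ((1 - a) + i * l * (a / w)) = 1 := by
  intro i
  have hwr : w ∣ r := hw ▸ Int.gcd_dvd_left r a
  have hwa : w ∣ a := hw ▸ Int.gcd_dvd_right r a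
  have hw0 : w ≠ 0 := by
    rintro rfl
    have : r = 0 := by simpa using hwr
    omega
  obtain ⟨a', ha'⟩ := hwa
  have hrl : r = w * l := by rw [hl, Int.mul_ediv_cancel' hwr]
  obtain ⟨p, q, hpq⟩ := Int.isCoprime_iff_gcd_eq_one.mpr hra
  subst ha'
  subst hrl
  have hdiv : w * a' / w = a' := Int.mul_ediv_cancel_left _ hw0
  rw [hdiv]
  constructor
  · rw [← Int.isCoprime_iff_gcd_eq_one]
    exact ⟨i * a' * a', 1 + i * l * a', by ring⟩
  · rw [← Int.isCoprime_iff_gcd_eq_one]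
    refine ⟨a' * (p * w + q * a' * i),
      -q * a' * (w - i * l) + (p * w + q * a' * i) * l
        - q * (1 - w * a' + i * l * a'), ?_⟩
    linear_combination hpq
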